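/- For 0 < w < m and ξ ∈ ℝ² \ {0}, the matrix A(w,ξ) = (1/((w²+|ξ|²)|ξ|²)) · [[2m + (|ξ|²/w²)(m − √(m²−w²)), ξ̄],[ξ, (|ξ|²/w²)(m − √(m²−w²))]] (where ξ is identified with ξ₁ + iξ₂) is self-adjoint and positive definite, with eigenvalues λ_{1,2} = (1/((w²+|ξ|²)|ξ|²))·( m + (|ξ|²/w²)(m − √(m²−w²)) ± √(m²+|ξ|²) ). -/

import Mathlib

open Matrix Real
open scoped ComplexOrder

lemma quad_pos (M T ξ₁ ξ₂ p0 q0 p1 q1 : ℝ) (hT : 0 < T) (hM : 0 < M)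
    (hξ : ξ₁ ^ 2 + ξ₂ ^ 2 < (2 * M + T) * T)
    (hx : 0 < p0 ^ 2 + q0 ^ 2 ∨ 0 < p1 ^ 2 + q1 ^ 2) :
    0 < (2 * M + T) * (p0 ^ 2 + q0 ^ 2) + T * (p1 ^ 2 + q1 ^ 2)
      + 2 * (ξ₁ * (p0 * p1 + q0 * q1) + ξ₂ * (p0 * q1 - q0 * p1)) := by
  have ha : 0 < 2 * M + T := by nlinarith
  have hS1 := sq_nonneg ((2 * M + T) * p0 + (ξ₁ * p1 + ξ₂ * q1))
  have hS2 := sq_nonneg ((2 * M + T) * q0 + (ξ₁ * q1 - ξ₂ * p1))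
  rcases hx with h | h
  · nlinarith [sq_nonneg (T * p1 + (ξ₁ * p0 - ξ₂ * q0)), sq_nonneg (T * q1 + (ξ₁ * q0 + ξ₂ * p0)),
      sq_nonneg (T * p1 + (ξ₁ * p0 + ξ₂ * q0)), sq_nonneg (T * q1 + (ξ₁ * q0 - ξ₂ * p0)),
      mul_pos (sub_pos.mpr hξ) h]
  · nlinarith [mul_pos (sub_pos.mpr hξ) h]

set_option maxHeartbeats 1600000 in
/-- The matrix A(w,ξ) arising in the analysis of threshold eigenfunctions is
    self-adjoint and positive definite, with the stated eigenvalues. -/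
theorem A_matrix_positive_definite
    (m w ξ₁ ξ₂ : ℝ) (hm : 0 < m) (hw : 0 < w) (hwm : w < m)
    (hξ : (ξ₁, ξ₂) ≠ (0, 0)) :
    let q : ℝ := ξ₁ ^ 2 + ξ₂ ^ 2
    let ξc : ℂ := Complex.mk ξ₁ ξ₂
    let A : Matrix (Fin 2) (Fin 2) ℂ :=
      ((1 / ((w ^ 2 + q) * q) : ℝ) : ℂ) •
        !![((2 * m + (q / w ^ 2) * (m - Real.sqrt (m ^ 2 - w ^ 2)) : ℝ) : ℂ),
             (starRingEnd ℂ) ξc;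
           ξc, (((q / w ^ 2) * (m - Real.sqrt (m ^ 2 - w ^ 2)) : ℝ) : ℂ)]
    A.IsHermitian ∧ A.PosDef ∧
    (∀ s : ℝ, s = 1 ∨ s = -1 →
      ∃ v : Fin 2 → ℂ, v ≠ 0 ∧
        A.mulVec v =
          (((1 / ((w ^ 2 + q) * q) *
              (m + (q / w ^ 2) * (m - Real.sqrt (m ^ 2 - w ^ 2)) +
                s * Real.sqrt (m ^ 2 + q)) : ℝ) : ℂ)) • v) := by
  intro q ξc A
  have hξ' : ξ₁ ≠ 0 ∨ ξ₂ ≠ 0 := by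
    by_contra h; push_neg at h; exact hξ (by simp [h.1, h.2])
  have hq : 0 < (ξ₁ ^ 2 + ξ₂ ^ 2) := by
    rcases hξ' with h | h <;>
      nlinarith [sq_nonneg ξ₁, sq_nonneg ξ₂, pow_pos (abs_pos.mpr h) 2, sq_abs ξ₁, sq_abs ξ₂]
  have hqq : 0 < q := hq
  have hcon : ξc * (starRingEnd ℂ) ξc = (q : ℂ) := by
    rw [Complex.mul_conj]
    norm_cast
    simp [ξc, Complex.normSq_mk, q, sq]
  set s0 := Real.sqrt (m ^ 2 - w ^ 2) with hs0
  have hs0sq : s0 ^ 2 = m ^ 2 - w ^ 2 := Real.sq_sqrt (by nlinarith)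
  have hs0nn : 0 ≤ s0 := Real.sqrt_nonneg _
  have hs0m : s0 < m := by nlinarith
  have herm : A.IsHermitian := by
    show Aᴴ = A
    ext i j
    fin_cases i <;> fin_cases j <;>
      simp [A, Matrix.conjTranspose_apply, Complex.conj_ofReal]
  refine ⟨herm, Matrix.posDef_iff_dotProduct_mulVec.mpr ⟨herm, ?_⟩, ?_⟩
  · -- positive definiteness
    intro x hx
    have hx' : x 0 ≠ 0 ∨ x 1 ≠ 0 := by
      by_contra h; push_neg at h
      exact hx (funext fun i => by fin_cases i <;> simp [h.1, h.2])
    rw [Complex.lt_def]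
    set X0 := x 0 with hX0
    set X1 := x 1 with hX1
    have expand : dotProduct (star x) (A *ᵥ x) =
        ((1 / ((w ^ 2 + (ξ₁ ^ 2 + ξ₂ ^ 2)) * (ξ₁ ^ 2 + ξ₂ ^ 2)) : ℝ) : ℂ) *
          ((starRingEnd ℂ) X0 * (((2 * m + ((ξ₁ ^ 2 + ξ₂ ^ 2) / w ^ 2) * (m - s0) : ℝ) : ℂ) * X0
              + (starRingEnd ℂ) ξc * X1) +
           (starRingEnd ℂ) X1 * (ξc * X0 + ((((ξ₁ ^ 2 + ξ₂ ^ 2) / w ^ 2) * (m - s0) : ℝ) : ℂ) * X1)) := by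
      simp [A, q, Matrix.mulVec, dotProduct, Fin.sum_univ_two, ← hX0, ← hX1]
      ring
    rw [expand]
    set T := (ξ₁ ^ 2 + ξ₂ ^ 2) / w ^ 2 * (m - s0) with hTdef
    set C := 1 / ((w ^ 2 + (ξ₁ ^ 2 + ξ₂ ^ 2)) * (ξ₁ ^ 2 + ξ₂ ^ 2)) with hCdef
    have hT1 : T * (m + s0) = ξ₁ ^ 2 + ξ₂ ^ 2 := by
      rw [hTdef]; field_simp; nlinarith [hs0sq]
    have hTpos : 0 < T := by
      rw [hTdef]; apply mul_pos (div_pos hq (by positivity)); linarith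
    have hCpos : 0 < C := by rw [hCdef]; positivity
    have hat : ξ₁ ^ 2 + ξ₂ ^ 2 < (2 * m + T) * T := by nlinarith
    set Z := ((C : ℝ) : ℂ) *
          ((starRingEnd ℂ) X0 * (((2 * m + T : ℝ) : ℂ) * X0 + (starRingEnd ℂ) ξc * X1) +
           (starRingEnd ℂ) X1 * (ξc * X0 + ((T : ℝ) : ℂ) * X1)) with hZ
    have im_eq : Z.im = 0 := by
      rw [hZ]
      simp only [ξc, Complex.mul_im, Complex.mul_re, Complex.add_im, Complex.add_re,
        Complex.ofReal_re, Complex.ofReal_im, Complex.conj_re, Complex.conj_im]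
      ring
    have re_eq : Z.re = C * ((2 * m + T) * (X0.re ^ 2 + X0.im ^ 2) + T * (X1.re ^ 2 + X1.im ^ 2)
        + 2 * (ξ₁ * (X0.re * X1.re + X0.im * X1.im) + ξ₂ * (X0.re * X1.im - X0.im * X1.re))) := by
      rw [hZ]
      simp only [ξc, Complex.mul_im, Complex.mul_re, Complex.add_im, Complex.add_re,
        Complex.ofReal_re, Complex.ofReal_im, Complex.conj_re, Complex.conj_im]
      ring
    refine ⟨?_, ?_⟩
    · rw [re_eq]
      simp only [Complex.zero_re]
      apply mul_pos hCpos
      apply quad_pos m T ξ₁ ξ₂ X0.re X0.im X1.re X1.im hTpos hm hat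
      rcases hx' with h | h
      · left
        have hh := Complex.normSq_pos.mpr h
        rw [Complex.normSq_apply] at hh
        simpa only [pow_two] using hh
      · right
        have hh := Complex.normSq_pos.mpr h
        rw [Complex.normSq_apply] at hh
        simpa only [pow_two] using hh
    · rw [im_eq]; simp
  · -- eigenvalues
    intro s hs
    have hs2 : s ^ 2 = 1 := by rcases hs with h | h <;> simp [h]
    have hμ : Real.sqrt (m ^ 2 + q) ^ 2 = m ^ 2 + q := Real.sq_sqrt (by positivity)
    refine ⟨![(starRingEnd ℂ) ξc, ((s * Real.sqrt (m ^ 2 + q) - m : ℝ) : ℂ)], ?_, ?_⟩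
    · intro h
      have h0 := congrFun h 0
      simp only [Matrix.cons_val_zero, Pi.zero_apply, map_eq_zero] at h0
      have h1 : ξ₁ = 0 ∧ ξ₂ = 0 := by simpa [ξc, Complex.ext_iff] using h0
      rcases hξ' with hne | hne
      · exact hne h1.1
      · exact hne h1.2
    · funext i
      fin_cases i <;>
        simp [A, q, Matrix.mulVec, dotProduct, Fin.sum_univ_two]
      · push_cast
        ring
      · have hμc : ((Real.sqrt (m^2+(ξ₁^2+ξ₂^2)) : ℂ)) ^ 2 = (m:ℂ)^2 + (ξ₁:ℂ)^2 + (ξ₂:ℂ)^2 := by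
          have h := Real.sq_sqrt (show (0:ℝ) ≤ m^2+(ξ₁^2+ξ₂^2) by positivity)
          have h2 : ((Real.sqrt (m^2+(ξ₁^2+ξ₂^2)) : ℂ)) ^ 2 = ((m^2+(ξ₁^2+ξ₂^2) : ℝ) : ℂ) := by
            exact_mod_cast h
          rw [h2]; push_cast; ring
        have hcon2 : ξc * (starRingEnd ℂ) ξc = (ξ₁:ℂ)^2 + (ξ₂:ℂ)^2 := by
          rw [hcon]; push_cast [q]; ring
        have hs2c : ((s : ℂ)) ^ 2 = 1 := by exact_mod_cast hs2
        push_cast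
        linear_combination (((ξ₁:ℂ)^2+(ξ₂:ℂ)^2)⁻¹ * ((ξ₁:ℂ)^2+(ξ₂:ℂ)^2+(w:ℂ)^2)⁻¹) * hcon2 -
          (((ξ₁:ℂ)^2+(ξ₂:ℂ)^2)⁻¹ * ((ξ₁:ℂ)^2+(ξ₂:ℂ)^2+(w:ℂ)^2)⁻¹) * (s:ℂ)^2 * hμc -
          (((ξ₁:ℂ)^2+(ξ₂:ℂ)^2)⁻¹ * ((ξ₁:ℂ)^2+(ξ₂:ℂ)^2+(w:ℂ)^2)⁻¹) * ((m:ℂ)^2+(ξ₁:ℂ)^2+(ξ₂:ℂ)^2) * hs2c
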